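/- Let g ≥ 3 be an integer, m = ⌊g/2⌋, and let δ₀, δ₁, …, δ_m be nonnegative real numbers, not all zero, such that δ₀ ≥ 1/(4g²) whenever δ₀ ≠ 0 and δ_i ≥ 1/((4i+2)(4(g−i)+2)) whenever δ_i ≠ 0, for 1 ≤ i ≤ m. If λ and κ are real numbers satisfying (8g+4)·λ ≥ g·δ₀ + Σ_{i=1}^{m} 4i(g−i)·δ_i and κ ≥ ((4g−4)/g)·λ, then κ ≥ (g−1)/(4g²(2g+1)). -/

import Mathlib

theorem stmt_11 (g : ℕ) (hg : 3 ≤ g) (δ : ℕ → ℝ)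
    (hnn : ∀ i ≤ g / 2, 0 ≤ δ i)
    (h0 : δ 0 ≠ 0 → 1 / (4 * (g : ℝ) ^ 2) ≤ δ 0)
    (hi : ∀ i, 1 ≤ i → i ≤ g / 2 → δ i ≠ 0 →
      1 / ((4 * (i : ℝ) + 2) * (4 * ((g : ℝ) - (i : ℝ)) + 2)) ≤ δ i)
    (hne : ∃ i ≤ g / 2, δ i ≠ 0)
    (lam κ : ℝ)
    (hmor : (g : ℝ) * δ 0 + ∑ i ∈ Finset.Icc 1 (g / 2), 4 * (i : ℝ) * ((g : ℝ) - (i : ℝ)) * δ i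
      ≤ (8 * (g : ℝ) + 4) * lam)
    (hslope : ((4 * (g : ℝ) - 4) / (g : ℝ)) * lam ≤ κ) :
    ((g : ℝ) - 1) / (4 * (g : ℝ) ^ 2 * (2 * (g : ℝ) + 1)) ≤ κ := by
  have hg3 : (3:ℝ) ≤ g := by exact_mod_cast hg
  have hg0 : (0:ℝ) < g := by linarith
  have hterm : ∀ i ∈ Finset.Icc 1 (g/2), 0 ≤ 4*(i:ℝ)*((g:ℝ)-(i:ℝ))*δ i := by
    intro i hi'
    simp only [Finset.mem_Icc] at hi'
    have hig : i ≤ g := le_trans hi'.2 (Nat.div_le_self _ _)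
    have h1 : (i:ℝ) ≤ g := by exact_mod_cast hig
    have h2 : (0:ℝ) ≤ i := by positivity
    have h3 := hnn i hi'.2
    have : (0:ℝ) ≤ (g:ℝ) - i := by linarith
    exact mul_nonneg (mul_nonneg (by positivity) this) h3
  -- key lower bound on the Moriwaki sum
  have hS : 1/(4*(g:ℝ)) ≤ (g : ℝ) * δ 0 +
      ∑ i ∈ Finset.Icc 1 (g / 2), 4 * (i : ℝ) * ((g : ℝ) - (i : ℝ)) * δ i := by
    obtain ⟨j, hj, hδj⟩ := hne
    rcases Nat.eq_zero_or_pos j with rfl | hj1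
    · have hb := h0 hδj
      have hsum : 0 ≤ ∑ i ∈ Finset.Icc 1 (g/2), 4*(i:ℝ)*((g:ℝ)-(i:ℝ))*δ i :=
        Finset.sum_nonneg hterm
      have : (g:ℝ) * (1 / (4 * (g:ℝ)^2)) ≤ (g:ℝ) * δ 0 :=
        mul_le_mul_of_nonneg_left hb hg0.le
      have heq : (g:ℝ) * (1 / (4 * (g:ℝ)^2)) = 1/(4*(g:ℝ)) := by
        field_simp
      linarith [heq ▸ this]
    · have hjm : j ∈ Finset.Icc 1 (g/2) := Finset.mem_Icc.mpr ⟨hj1, hj⟩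
      have hb := hi j hj1 hj hδj
      have ha1 : (1:ℝ) ≤ (j:ℝ) := by exact_mod_cast hj1
      have hb1 : (1:ℝ) ≤ (g:ℝ) - (j:ℝ) := by
        have : j + 1 ≤ g := by omega
        have : ((j:ℝ)) + 1 ≤ g := by exact_mod_cast this
        linarith
      have hd1 : (0:ℝ) < 4*(j:ℝ)+2 := by linarith
      have hd2 : (0:ℝ) < 4*((g:ℝ)-(j:ℝ))+2 := by linarith
      have hab : (0:ℝ) ≤ 4*(j:ℝ)*((g:ℝ)-(j:ℝ)) := by nlinarith
      have hterm' : 4*(j:ℝ)*((g:ℝ)-(j:ℝ)) * (1 / ((4*(j:ℝ)+2)*(4*((g:ℝ)-(j:ℝ))+2)))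
          ≤ 4*(j:ℝ)*((g:ℝ)-(j:ℝ)) * δ j := mul_le_mul_of_nonneg_left hb hab
      have hkey : 1/(4*(g:ℝ)) ≤
          4*(j:ℝ)*((g:ℝ)-(j:ℝ)) * (1 / ((4*(j:ℝ)+2)*(4*((g:ℝ)-(j:ℝ))+2))) := by
        rw [mul_one_div, div_le_div_iff₀ (by linarith) (mul_pos hd1 hd2)]
        nlinarith [mul_nonneg (sub_nonneg.mpr ha1) (sub_nonneg.mpr hb1),
          sq_nonneg ((g:ℝ) - 2)]
      have hsum : 4*(j:ℝ)*((g:ℝ)-(j:ℝ)) * δ j ≤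
          ∑ i ∈ Finset.Icc 1 (g/2), 4*(i:ℝ)*((g:ℝ)-(i:ℝ))*δ i :=
        Finset.single_le_sum hterm hjm
      have h0nn : 0 ≤ (g:ℝ) * δ 0 := mul_nonneg hg0.le (hnn 0 (Nat.zero_le _))
      linarith
  have hlam : 1/(4*(g:ℝ)) ≤ (8*(g:ℝ)+4) * lam := le_trans hS hmor
  have hlam' : 1/(4*(g:ℝ)) / (8*(g:ℝ)+4) ≤ lam := by
    rw [div_le_iff₀ (by linarith)]
    linarith [hlam]
  have hc : (0:ℝ) ≤ (4*(g:ℝ)-4)/(g:ℝ) := div_nonneg (by linarith) hg0.le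
  have h5 : (4*(g:ℝ)-4)/(g:ℝ) * (1/(4*(g:ℝ)) / (8*(g:ℝ)+4)) ≤
      (4*(g:ℝ)-4)/(g:ℝ) * lam := mul_le_mul_of_nonneg_left hlam' hc
  have heq : (4*(g:ℝ)-4)/(g:ℝ) * (1/(4*(g:ℝ)) / (8*(g:ℝ)+4)) =
      ((g:ℝ)-1)/(4*(g:ℝ)^2*(2*(g:ℝ)+1)) := by
    field_simp
    ring
  linarith [heq ▸ h5]
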